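/- If x and y are real numbers with 0 < x < 0.5 and max{3x-1, 0} < y < x, then ((x-y)/(1-3x+y)) · ((1-3x+y)/(e·(x-y)^2))^(2x-y) · ((1-3x+y)/6)^(x-y) · ((1-3x+y)/(2y))^y < 0.7524. -/

import Mathlib

open Real Finset

noncomputable def gf (u v : ℝ) : ℝ :=
  Real.log u - (1-3*u-2*v)*Real.log (1-3*u-2*v) - (2*u+v) - 2*(2*u+v)*Real.log u
    - u*Real.log 6 - v*Real.log 2 - v*Real.log v

lemma convex_pos {p a s : ℝ} (hp : 0 < p) (ha : 0 < a) (h0 : 0 ≤ s) (h1 : s ≤ 1) :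
    0 < p + s*(a-p) := by
  rcases lt_or_ge s 1 with h|h
  · nlinarith [mul_pos (show (0:ℝ) < 1 - s by linarith) hp, mul_nonneg h0 ha.le]
  · have hs : s = 1 := le_antisymm h1 h
    rw [hs]; linarith

lemma series_bound {x lo hi : ℝ} (n : ℕ) (hx : |x| < 1)
    (h1 : lo ≤ -(∑ i ∈ Finset.range n, x^(i+1)/(i+1)) - |x|^(n+1)/(1-|x|))
    (h2 : -(∑ i ∈ Finset.range n, x^(i+1)/(i+1)) + |x|^(n+1)/(1-|x|) ≤ hi) :
    lo ≤ Real.log (1-x) ∧ Real.log (1-x) ≤ hi := by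
  have h := Real.abs_log_sub_add_sum_range_le hx n
  rw [abs_le] at h
  exact ⟨by linarith [h.1], by linarith [h.2]⟩

lemma quad_nonneg {A T c da dt : ℝ} (hA : 0 < A) (hT : 0 < T) (hc : 0 < c) :
    0 ≤ T*(c^2+7*A*c+9*A^2)*da^2 + 4*A*T*(3*A+c)*da*dt + A^2*(c+4*T)*dt^2 := by
  have halpha : (0:ℝ) < T*(c^2+7*A*c+9*A^2) :=
    mul_pos hT (by nlinarith [mul_pos hc hc, mul_pos hA hc, mul_pos hA hA])
  have h9 : (0:ℝ) < 9*A^2+7*A*c+c^2+4*A*T := by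
    nlinarith [mul_pos hc hc, mul_pos hA hc, mul_pos hA hA, mul_pos hA hT]
  have hR : (0:ℝ) ≤ 4*A^2*T*c*(9*A^2+7*A*c+c^2+4*A*T)*dt^2 :=
    mul_nonneg (mul_pos (mul_pos (by positivity) hc) h9).le (sq_nonneg dt)
  nlinarith [halpha, hR,
    sq_nonneg (2*(T*(c^2+7*A*c+9*A^2))*da + 4*A*T*(3*A+c)*dt)]

lemma F2_nonpos {A T da dt : ℝ} (hA : 0 < A) (hT : 0 < T) (hC : 0 < 1-3*A-2*T) :
    -(da^2)/A^2 - (3*da+2*dt)^2/(1-3*A-2*T) - 4*(2*da+dt)*da/A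
      + 2*(2*A+T)*da^2/A^2 - dt^2/T ≤ 0 := by
  have hq := quad_nonneg (c := 1-3*A-2*T) (da := da) (dt := dt) hA hT hC
  have hkey : -(da^2)/A^2 - (3*da+2*dt)^2/(1-3*A-2*T) - 4*(2*da+dt)*da/A
      + 2*(2*A+T)*da^2/A^2 - dt^2/T
      = -((T*((1-3*A-2*T)^2+7*A*(1-3*A-2*T)+9*A^2)*da^2
          + 4*A*T*(3*A+(1-3*A-2*T))*da*dt
          + A^2*((1-3*A-2*T)+4*T)*dt^2)/(A^2*(1-3*A-2*T)*T)) := by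
    set C := 1-3*A-2*T with hCdef
    have hC' : C ≠ 0 := hC.ne'
    field_simp
    rw [hCdef]
    ring
  rw [hkey]
  exact neg_nonpos_of_nonneg (div_nonneg hq
    (mul_nonneg (mul_nonneg (sq_nonneg A) hC.le) hT.le))


lemma log3_bounds : (10986122881/10000000000 : ℝ) ≤ Real.log 3
    ∧ Real.log 3 ≤ 10986122892/10000000000 := by
  have hx : |(1/4 : ℝ)| < 1 := by rw [abs_of_nonneg (by norm_num)]; norm_num
  have hs := series_bound (lo := (-719205181141/2500000000000 : ℝ))
    (hi := (-1438410362233/5000000000000 : ℝ)) 18 hx ?_ ?_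
  · have h3 : Real.log 3 = 2*Real.log 2 + Real.log (1 - (1/4:ℝ)) := by
      rw [show (1 - (1/4:ℝ)) = 3/4 by norm_num,
        Real.log_div (by norm_num) (by norm_num),
        show (4:ℝ) = 2^2 by norm_num, Real.log_pow]
      push_cast; ring
    rw [h3]
    constructor
    · linarith [hs.1, Real.log_two_gt_d9]
    · linarith [hs.2, Real.log_two_lt_d9]
  · rw [abs_of_nonneg (by norm_num : (0:ℝ) ≤ 1/4)]
    simp only [Finset.sum_range_succ, Finset.sum_range_zero]
    norm_num
  · rw [abs_of_nonneg (by norm_num : (0:ℝ) ≤ 1/4)]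
    simp only [Finset.sum_range_succ, Finset.sum_range_zero]
    norm_num

lemma logp_bounds : (-20493691634/10000000000 : ℝ) ≤ Real.log (6440807/50000000)
    ∧ Real.log (6440807/50000000) ≤ -20493691618/10000000000 := by
  have hx : |(-190807/6250000 : ℝ)| < 1 := by
    rw [abs_of_nonpos (by norm_num)]; norm_num
  have hs := series_bound (lo := (150361895381/5000000000000 : ℝ))
    (hi := (300723790763/10000000000000 : ℝ)) 8 hx ?_ ?_
  · have he : Real.log (6440807/50000000)
        = Real.log (1 - (-190807/6250000:ℝ)) - 3*Real.log 2 := by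
      rw [show (6440807/50000000:ℝ) = (1 - (-190807/6250000:ℝ))/2^3 by norm_num,
        Real.log_div (by norm_num) (by norm_num), Real.log_pow]
      push_cast; ring
    rw [he]
    constructor
    · linarith [hs.1, Real.log_two_lt_d9]
    · linarith [hs.2, Real.log_two_gt_d9]
  · rw [abs_of_nonpos (by norm_num : (-190807/6250000:ℝ) ≤ 0)]
    simp only [Finset.sum_range_succ, Finset.sum_range_zero]
    norm_num
  · rw [abs_of_nonpos (by norm_num : (-190807/6250000:ℝ) ≤ 0)]
    simp only [Finset.sum_range_succ, Finset.sum_range_zero]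
    norm_num

lemma logq_bounds : (-13459075210/10000000000 : ℝ) ≤ Real.log (26030337/100000000)
    ∧ Real.log (26030337/100000000) ≤ -13459075199/10000000000 := by
  have hx : |(-1030337/25000000 : ℝ)| < 1 := by
    rw [abs_of_nonpos (by norm_num)]; norm_num
  have hs := series_bound (lo := (403868406541/10000000000000 : ℝ))
    (hi := (403868406549/10000000000000 : ℝ)) 8 hx ?_ ?_
  · have he : Real.log (26030337/100000000)
        = Real.log (1 - (-1030337/25000000:ℝ)) - 2*Real.log 2 := by
      rw [show (26030337/100000000:ℝ) = (1 - (-1030337/25000000:ℝ))/2^2 by norm_num,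
        Real.log_div (by norm_num) (by norm_num), Real.log_pow]
      push_cast; ring
    rw [he]
    constructor
    · linarith [hs.1, Real.log_two_lt_d9]
    · linarith [hs.2, Real.log_two_gt_d9]
  · rw [abs_of_nonpos (by norm_num : (-1030337/25000000:ℝ) ≤ 0)]
    simp only [Finset.sum_range_succ, Finset.sum_range_zero]
    norm_num
  · rw [abs_of_nonpos (by norm_num : (-1030337/25000000:ℝ) ≤ 0)]
    simp only [Finset.sum_range_succ, Finset.sum_range_zero]
    norm_num

lemma logc_bounds : (-23757490819/10000000000 : ℝ) ≤ Real.log (2323621/25000000)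
    ∧ Real.log (2323621/25000000) ≤ -23757490782/10000000000 := by
  have hx : |(20129/2343750 : ℝ)| < 1 := by
    rw [abs_of_nonneg (by norm_num)]; norm_num
  have hs := series_bound (lo := (-86254659411/10000000000000 : ℝ))
    (hi := (-8625465941/1000000000000 : ℝ)) 6 hx ?_ ?_
  · have he : Real.log (2323621/25000000)
        = Real.log 3 + Real.log (1 - (20129/2343750:ℝ)) - 5*Real.log 2 := by
      rw [show (2323621/25000000:ℝ) = 3*(1 - (20129/2343750:ℝ))/2^5 by norm_num,
        Real.log_div (by norm_num) (by norm_num),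
        Real.log_mul (by norm_num) (by norm_num), Real.log_pow]
      push_cast; ring
    rw [he]
    constructor
    · linarith [hs.1, Real.log_two_lt_d9, log3_bounds.1]
    · linarith [hs.2, Real.log_two_gt_d9, log3_bounds.2]
  · rw [abs_of_nonneg (by norm_num : (0:ℝ) ≤ 20129/2343750)]
    simp only [Finset.sum_range_succ, Finset.sum_range_zero]
    norm_num
  · rw [abs_of_nonneg (by norm_num : (0:ℝ) ≤ 20129/2343750)]
    simp only [Finset.sum_range_succ, Finset.sum_range_zero]
    norm_num

lemma logt_bound : (-2844871827/10000000000 : ℝ) ≤ Real.log (1881/2500) := by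
  have hx : |(-2/625 : ℝ)| < 1 := by
    rw [abs_of_nonpos (by norm_num)]; norm_num
  have hs := series_bound (lo := (6389781793/2000000000000 : ℝ))
    (hi := (15974454483/5000000000000 : ℝ)) 5 hx ?_ ?_
  · have he : Real.log (1881/2500)
        = Real.log 3 + Real.log (1 - (-2/625:ℝ)) - 2*Real.log 2 := by
      rw [show (1881/2500:ℝ) = 3*(1 - (-2/625:ℝ))/2^2 by norm_num,
        Real.log_div (by norm_num) (by norm_num),
        Real.log_mul (by norm_num) (by norm_num), Real.log_pow]
      push_cast; ring
    rw [he]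
    linarith [hs.1, Real.log_two_lt_d9, log3_bounds.1]
  · rw [abs_of_nonpos (by norm_num : (-2/625:ℝ) ≤ 0)]
    simp only [Finset.sum_range_succ, Finset.sum_range_zero]
    norm_num
  · rw [abs_of_nonpos (by norm_num : (-2/625:ℝ) ≤ 0)]
    simp only [Finset.sum_range_succ, Finset.sum_range_zero]
    norm_num

lemma log6_eq : Real.log 6 = Real.log 2 + Real.log 3 := by
  rw [show (6:ℝ) = 2*3 by norm_num, Real.log_mul (by norm_num) (by norm_num)]

lemma exp_form (a t : ℝ) (ha : 0 < a) (ht : 0 < t) (hc : 0 < 1-3*a-2*t) :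
    (a/(1-3*a-2*t)) * ((1-3*a-2*t)/(Real.exp 1 * a^2))^(2*a+t)
      * ((1-3*a-2*t)/6)^a * ((1-3*a-2*t)/(2*t))^t = Real.exp (gf a t) := by
  have hb1 : (0:ℝ) < (1-3*a-2*t)/(Real.exp 1 * a^2) := by positivity
  have hb2 : (0:ℝ) < (1-3*a-2*t)/6 := by positivity
  have hb3 : (0:ℝ) < (1-3*a-2*t)/(2*t) := by positivity
  rw [Real.rpow_def_of_pos hb1, Real.rpow_def_of_pos hb2, Real.rpow_def_of_pos hb3,
      show a/(1-3*a-2*t) = Real.exp (Real.log (a/(1-3*a-2*t))) from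
        (Real.exp_log (by positivity)).symm,
      ← Real.exp_add, ← Real.exp_add, ← Real.exp_add]
  congr 1
  rw [Real.log_div ha.ne' hc.ne',
      Real.log_div hc.ne' (by positivity : (0:ℝ) < Real.exp 1 * a^2).ne',
      Real.log_mul (Real.exp_pos 1).ne' (by positivity : (0:ℝ) < a^2).ne',
      Real.log_exp, Real.log_pow,
      Real.log_div hc.ne' (by norm_num : (6:ℝ) ≠ 0),
      Real.log_div hc.ne' (by positivity : (0:ℝ) < 2*t).ne',
      Real.log_mul (two_ne_zero) ht.ne']
  simp only [gf]
  push_cast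
  ring

set_option maxHeartbeats 1000000 in
lemma tangent (p q a t : ℝ) (hp : 0 < p) (hq : 0 < q) (hc0 : 0 < 1-3*p-2*q)
    (ha : 0 < a) (ht : 0 < t) (hc : 0 < 1-3*a-2*t) :
    gf a t ≤ gf p q
      + ((1-2*q)/p + 3*Real.log (1-3*p-2*q) - 3 - 4*Real.log p - Real.log 6) * (a-p)
      + (2*Real.log (1-3*p-2*q) - 2*Real.log p - Real.log 2 - Real.log q) * (t-q) := by
  have hApos : ∀ s ∈ Set.Icc (0:ℝ) 1, 0 < p + s*(a-p) := fun s hs =>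
    convex_pos hp ha hs.1 hs.2
  have hTpos : ∀ s ∈ Set.Icc (0:ℝ) 1, 0 < q + s*(t-q) := fun s hs =>
    convex_pos hq ht hs.1 hs.2
  have hCpos : ∀ s ∈ Set.Icc (0:ℝ) 1, 0 < 1-3*(p+s*(a-p))-2*(q+s*(t-q)) := by
    intro s hs
    have h := convex_pos hc0 hc hs.1 hs.2
    linarith
  have hdA : ∀ s : ℝ, HasDerivAt (fun u : ℝ => p + u*(a-p)) (a-p) s := by
    intro s
    simpa using ((hasDerivAt_id s).mul_const (a-p)).const_add p
  have hdT : ∀ s : ℝ, HasDerivAt (fun u : ℝ => q + u*(t-q)) (t-q) s := by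
    intro s
    simpa using ((hasDerivAt_id s).mul_const (t-q)).const_add q
  have hdC : ∀ s : ℝ, HasDerivAt
      (fun u : ℝ => 1-3*(p+u*(a-p))-2*(q+u*(t-q))) (-(3*(a-p)+2*(t-q))) s := by
    intro s
    have h := (((hdA s).const_mul 3).add ((hdT s).const_mul 2)).const_sub 1
    have hfun : (fun u : ℝ => 1-3*(p+u*(a-p))-2*(q+u*(t-q)))
        = (fun u : ℝ => 1 - (3*(p+u*(a-p)) + 2*(q+u*(t-q)))) := by
      funext u; ring
    rw [hfun]
    exact h
  -- first derivative
  have hD1 : ∀ s ∈ Set.Icc (0:ℝ) 1, HasDerivAt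
      (fun u => gf (p+u*(a-p)) (q+u*(t-q)))
      ((a-p)/(p+s*(a-p))
        + (3*(a-p)+2*(t-q))*(Real.log (1-3*(p+s*(a-p))-2*(q+s*(t-q))) + 1)
        - (2*(a-p)+(t-q))
        - 2*(2*(a-p)+(t-q))*Real.log (p+s*(a-p))
        - 2*(2*(p+s*(a-p))+(q+s*(t-q)))*(a-p)/(p+s*(a-p))
        - (a-p)*Real.log 6 - (t-q)*Real.log 2
        - (t-q)*(Real.log (q+s*(t-q)) + 1)) s := by
    intro s hs
    have hA := hApos s hs; have hT := hTpos s hs; have hC := hCpos s hs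
    have l1 : HasDerivAt (fun u : ℝ => Real.log (p+u*(a-p))) ((a-p)/(p+s*(a-p))) s :=
      (hdA s).log hA.ne'
    have l2 := (hdC s).mul ((hdC s).log hC.ne')
    have l3 : HasDerivAt (fun u : ℝ => 2*(p+u*(a-p))+(q+u*(t-q))) (2*(a-p)+(t-q)) s :=
      ((hdA s).const_mul 2).add (hdT s)
    have l4 := (l3.const_mul 2).mul l1
    have l5 := (hdA s).mul_const (Real.log 6)
    have l6 := (hdT s).mul_const (Real.log 2)
    have l7 := (hdT s).mul ((hdT s).log hT.ne')
    have htot := (((((l1.sub l2).sub l3).sub l4).sub l5).sub l6).sub l7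
    simp only [gf]
    refine htot.congr_deriv ?_
    set C := 1-3*(p+s*(a-p))-2*(q+s*(t-q)) with hCdef
    have hC' : C ≠ 0 := hC.ne'
    field_simp
    ring
  -- second derivative
  have hD2 : ∀ s ∈ Set.Icc (0:ℝ) 1, HasDerivAt
      (fun u => (a-p)/(p+u*(a-p))
        + (3*(a-p)+2*(t-q))*(Real.log (1-3*(p+u*(a-p))-2*(q+u*(t-q))) + 1)
        - (2*(a-p)+(t-q))
        - 2*(2*(a-p)+(t-q))*Real.log (p+u*(a-p))
        - 2*(2*(p+u*(a-p))+(q+u*(t-q)))*(a-p)/(p+u*(a-p))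
        - (a-p)*Real.log 6 - (t-q)*Real.log 2
        - (t-q)*(Real.log (q+u*(t-q)) + 1))
      (-((a-p)^2)/(p+s*(a-p))^2
        - (3*(a-p)+2*(t-q))^2/(1-3*(p+s*(a-p))-2*(q+s*(t-q)))
        - 4*(2*(a-p)+(t-q))*(a-p)/(p+s*(a-p))
        + 2*(2*(p+s*(a-p))+(q+s*(t-q)))*(a-p)^2/(p+s*(a-p))^2
        - (t-q)^2/(q+s*(t-q))) s := by
    intro s hs
    have hA := hApos s hs; have hT := hTpos s hs; have hC := hCpos s hs
    have l1 : HasDerivAt (fun u : ℝ => Real.log (p+u*(a-p))) ((a-p)/(p+s*(a-p))) s :=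
      (hdA s).log hA.ne'
    have l3 : HasDerivAt (fun u : ℝ => 2*(p+u*(a-p))+(q+u*(t-q))) (2*(a-p)+(t-q)) s :=
      ((hdA s).const_mul 2).add (hdT s)
    have m1 := (hasDerivAt_const s (a-p)).div (hdA s) hA.ne'
    have m2 := (((hdC s).log hC.ne').add_const 1).const_mul (3*(a-p)+2*(t-q))
    have m3 := hasDerivAt_const s (2*(a-p)+(t-q))
    have m4 := l1.const_mul (2*(2*(a-p)+(t-q)))
    have m5 := ((l3.const_mul 2).mul_const (a-p)).div (hdA s) hA.ne'
    have m6 := hasDerivAt_const s ((a-p)*Real.log 6)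
    have m7 := hasDerivAt_const s ((t-q)*Real.log 2)
    have m8 := (((hdT s).log hT.ne').add_const 1).const_mul (t-q)
    have htot := ((((((m1.add m2).sub m3).sub m4).sub m5).sub m6).sub m7).sub m8
    refine htot.congr_deriv ?_
    set C := 1-3*(p+s*(a-p))-2*(q+s*(t-q)) with hCdef
    have hC' : C ≠ 0 := hC.ne'
    field_simp
    ring
  -- second derivative nonpositive
  have hF2 : ∀ s ∈ Set.Icc (0:ℝ) 1,
      (-((a-p)^2)/(p+s*(a-p))^2
        - (3*(a-p)+2*(t-q))^2/(1-3*(p+s*(a-p))-2*(q+s*(t-q)))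
        - 4*(2*(a-p)+(t-q))*(a-p)/(p+s*(a-p))
        + 2*(2*(p+s*(a-p))+(q+s*(t-q)))*(a-p)^2/(p+s*(a-p))^2
        - (t-q)^2/(q+s*(t-q))) ≤ 0 := fun s hs =>
    F2_nonpos (hApos s hs) (hTpos s hs) (hCpos s hs)
  -- antitone first derivative
  have hanti : AntitoneOn (fun s =>
      (a-p)/(p+s*(a-p))
        + (3*(a-p)+2*(t-q))*(Real.log (1-3*(p+s*(a-p))-2*(q+s*(t-q))) + 1)
        - (2*(a-p)+(t-q))
        - 2*(2*(a-p)+(t-q))*Real.log (p+s*(a-p))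
        - 2*(2*(p+s*(a-p))+(q+s*(t-q)))*(a-p)/(p+s*(a-p))
        - (a-p)*Real.log 6 - (t-q)*Real.log 2
        - (t-q)*(Real.log (q+s*(t-q)) + 1)) (Set.Icc (0:ℝ) 1) := by
    apply antitoneOn_of_deriv_nonpos (convex_Icc 0 1)
    · exact fun s hs => ((hD2 s hs).continuousAt).continuousWithinAt
    · rw [interior_Icc]
      exact fun s hs => ((hD2 s (Set.Ioo_subset_Icc_self hs)).differentiableAt).differentiableWithinAt
    · intro s hs
      rw [interior_Icc] at hs
      rw [(hD2 s (Set.Ioo_subset_Icc_self hs)).deriv]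
      exact hF2 s (Set.Ioo_subset_Icc_self hs)
  -- mean value theorem
  obtain ⟨ξ, hξ, hslope⟩ := exists_hasDerivAt_eq_slope
    (fun u => gf (p+u*(a-p)) (q+u*(t-q)))
    (fun s => (a-p)/(p+s*(a-p))
        + (3*(a-p)+2*(t-q))*(Real.log (1-3*(p+s*(a-p))-2*(q+s*(t-q))) + 1)
        - (2*(a-p)+(t-q))
        - 2*(2*(a-p)+(t-q))*Real.log (p+s*(a-p))
        - 2*(2*(p+s*(a-p))+(q+s*(t-q)))*(a-p)/(p+s*(a-p))
        - (a-p)*Real.log 6 - (t-q)*Real.log 2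
        - (t-q)*(Real.log (q+s*(t-q)) + 1))
    zero_lt_one
    (fun s hs => ((hD1 s hs).continuousAt).continuousWithinAt)
    (fun s hs => hD1 s (Set.Ioo_subset_Icc_self hs))
  have hle := hanti (Set.mem_Icc.mpr ⟨le_refl (0:ℝ), zero_le_one⟩)
    (Set.mem_Icc.mpr ⟨hξ.1.le, hξ.2.le⟩) hξ.1.le
  simp only [sub_zero, div_one] at hslope
  -- combine
  have h1 : gf (p+1*(a-p)) (q+1*(t-q)) - gf (p+0*(a-p)) (q+0*(t-q))
      ≤ (a-p)/(p+0*(a-p))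
        + (3*(a-p)+2*(t-q))*(Real.log (1-3*(p+0*(a-p))-2*(q+0*(t-q))) + 1)
        - (2*(a-p)+(t-q))
        - 2*(2*(a-p)+(t-q))*Real.log (p+0*(a-p))
        - 2*(2*(p+0*(a-p))+(q+0*(t-q)))*(a-p)/(p+0*(a-p))
        - (a-p)*Real.log 6 - (t-q)*Real.log 2
        - (t-q)*(Real.log (q+0*(t-q)) + 1) := by
    rw [← hslope]
    exact hle
  rw [show p+1*(a-p) = a by ring, show q+1*(t-q) = t by ring,
      show p+0*(a-p) = p by ring, show q+0*(t-q) = q by ring] at h1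
  have h2 : (a-p)/p
        + (3*(a-p)+2*(t-q))*(Real.log (1-3*p-2*q) + 1)
        - (2*(a-p)+(t-q))
        - 2*(2*(a-p)+(t-q))*Real.log p
        - 2*(2*p+q)*(a-p)/p
        - (a-p)*Real.log 6 - (t-q)*Real.log 2
        - (t-q)*(Real.log q + 1)
      = ((1-2*q)/p + 3*Real.log (1-3*p-2*q) - 3 - 4*Real.log p - Real.log 6) * (a-p)
      + (2*Real.log (1-3*p-2*q) - 2*Real.log p - Real.log 2 - Real.log q) * (t-q) := by
    field_simp
    ring
  linarith [h1, h2.le, h2.ge]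

lemma numeric (a t : ℝ) (ha : 0 < a) (ha3 : a < 1/3) (ht : 0 < t) (ht2 : t < 1/2) :
    gf (6440807/50000000) (26030337/100000000)
      + ((1-2*(26030337/100000000))/(6440807/50000000)
          + 3*Real.log (1-3*(6440807/50000000)-2*(26030337/100000000)) - 3
          - 4*Real.log (6440807/50000000) - Real.log 6) * (a - 6440807/50000000)
      + (2*Real.log (1-3*(6440807/50000000)-2*(26030337/100000000))
          - 2*Real.log (6440807/50000000) - Real.log 2
          - Real.log (26030337/100000000)) * (t - 26030337/100000000)
      < Real.log (1881/2500) := by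
  simp only [gf]
  rw [show (1-3*(6440807/50000000:ℝ)-2*(26030337/100000000)) = 2323621/25000000 by norm_num,
      show ((1-2*(26030337/100000000:ℝ))/(6440807/50000000)) = 23969663/6440807 by norm_num]
  obtain ⟨hp1, hp2⟩ := logp_bounds
  obtain ⟨hq1, hq2⟩ := logq_bounds
  obtain ⟨hc1, hc2⟩ := logc_bounds
  obtain ⟨h31, h32⟩ := log3_bounds
  have h21 := Real.log_two_gt_d9
  have h22 := Real.log_two_lt_d9
  have h6 := log6_eq
  have hfa : |23969663/6440807 + 3*Real.log (2323621/25000000) - 3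
      - 4*Real.log (6440807/50000000) - Real.log 6| ≤ 1/1000000 :=
    abs_le.mpr ⟨by linarith, by linarith⟩
  have hft : |2*Real.log (2323621/25000000) - 2*Real.log (6440807/50000000)
      - Real.log 2 - Real.log (26030337/100000000)| ≤ 6/10000000 :=
    abs_le.mpr ⟨by linarith, by linarith⟩
  have hda : |a - 6440807/50000000| ≤ 1/3 := abs_le.mpr ⟨by linarith, by linarith⟩
  have hdt : |t - 26030337/100000000| ≤ 1/2 := abs_le.mpr ⟨by linarith, by linarith⟩
  have h1 : (23969663/6440807 + 3*Real.log (2323621/25000000) - 3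
      - 4*Real.log (6440807/50000000) - Real.log 6) * (a - 6440807/50000000)
      ≤ 1/3000000 := by
    calc (23969663/6440807 + 3*Real.log (2323621/25000000) - 3
        - 4*Real.log (6440807/50000000) - Real.log 6) * (a - 6440807/50000000)
        ≤ |(23969663/6440807 + 3*Real.log (2323621/25000000) - 3
            - 4*Real.log (6440807/50000000) - Real.log 6) * (a - 6440807/50000000)| :=
          le_abs_self _
      _ = |23969663/6440807 + 3*Real.log (2323621/25000000) - 3
            - 4*Real.log (6440807/50000000) - Real.log 6| * |a - 6440807/50000000| :=
          abs_mul _ _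
      _ ≤ (1/1000000)*(1/3) :=
          mul_le_mul hfa hda (abs_nonneg _) (by norm_num)
      _ ≤ 1/3000000 := by norm_num
  have h2 : (2*Real.log (2323621/25000000) - 2*Real.log (6440807/50000000)
      - Real.log 2 - Real.log (26030337/100000000)) * (t - 26030337/100000000)
      ≤ 3/10000000 := by
    calc (2*Real.log (2323621/25000000) - 2*Real.log (6440807/50000000)
        - Real.log 2 - Real.log (26030337/100000000)) * (t - 26030337/100000000)
        ≤ |(2*Real.log (2323621/25000000) - 2*Real.log (6440807/50000000)
            - Real.log 2 - Real.log (26030337/100000000)) * (t - 26030337/100000000)| :=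
          le_abs_self _
      _ = |2*Real.log (2323621/25000000) - 2*Real.log (6440807/50000000)
            - Real.log 2 - Real.log (26030337/100000000)| * |t - 26030337/100000000| :=
          abs_mul _ _
      _ ≤ (6/10000000)*(1/2) :=
          mul_le_mul hft hdt (abs_nonneg _) (by norm_num)
      _ ≤ 3/10000000 := by norm_num
  linarith [logt_bound, h1, h2]

theorem stmt_9 (x y : ℝ) (hx0 : 0 < x) (hx : x < 0.5)
    (hy1 : max (3 * x - 1) 0 < y) (hy2 : y < x) :
    ((x - y) / (1 - 3 * x + y)) *
        ((1 - 3 * x + y) / (Real.exp 1 * (x - y) ^ 2)) ^ (2 * x - y) *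
        ((1 - 3 * x + y) / 6) ^ (x - y) *
        ((1 - 3 * x + y) / (2 * y)) ^ y < 0.7524 := by
  have hy0 : 0 < y := (le_max_right (3*x-1) 0).trans_lt hy1
  have hcx : 0 < 1 - 3*x + y := by
    have := (le_max_left (3*x-1) 0).trans_lt hy1
    linarith
  have ha : 0 < x - y := by linarith
  have hc' : 0 < 1 - 3*(x-y) - 2*y := by linarith
  rw [show 1 - 3*x + y = 1 - 3*(x-y) - 2*y by ring,
      show 2*x - y = 2*(x-y) + y by ring,
      exp_form (x-y) y ha hy0 hc',
      show (0.7524:ℝ) = Real.exp (Real.log (1881/2500)) from by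
        rw [Real.exp_log (by norm_num : (0:ℝ) < 1881/2500)]; norm_num]
  apply Real.exp_lt_exp.mpr
  exact lt_of_le_of_lt
    (tangent (6440807/50000000) (26030337/100000000) (x-y) y
      (by norm_num) (by norm_num) (by norm_num) ha hy0 hc')
    (numeric (x-y) y ha (by linarith) hy0 (by linarith))
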